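/- Let n ≥ 1 and let A ⊂ ℕⁿ be a finite nonempty set. Define ρ : ℂⁿ → ℝ by ρ(x) = Σ_{α ∈ A} Π_{i=1}^n |x_i|^{α_i} (with the convention 0⁰ = 1). Let u = (u₁,…,u_n) ∈ ℝ_{≥0}ⁿ belong to the Newton polyhedron Γ₊(A) = conv(A) + ℝ_{≥0}ⁿ (the Minkowski sum of the convex hull of A and the nonnegative orthant in ℝⁿ). Then there exist C > 0 and a neighborhood U of 0 in ℂⁿ such that for all x ∈ U, ρ(x) ≥ C · Π_{i=1}^n |x_i|^{u_i}, where |x_i|^{u_i} denotes the real power with the convention 0⁰ = 1. -/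
import Mathlib

open Filter

/-- Antitonicity of `t ↦ t^p` on `[0,1]` for nonneg exponents, with `0^0 = 1`. -/
lemma rpow_le_rpow_exp_ge {t p q : ℝ} (ht : 0 ≤ t) (ht1 : t ≤ 1) (hp : 0 ≤ p)
    (hpq : p ≤ q) : t ^ q ≤ t ^ p := by
  rcases eq_or_lt_of_le ht with h0 | h0
  · rcases eq_or_lt_of_le hp with hp0 | hp0
    · rw [← h0, ← hp0, Real.rpow_zero]
      exact Real.rpow_le_one le_rfl (by norm_num) (by linarith)
    · rw [← h0, Real.zero_rpow (by linarith), Real.zero_rpow (by linarith)]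
  · exact Real.rpow_le_rpow_of_exponent_ge h0 ht1 hpq

/-- Weighted AM-GM pulled back through exponents. -/
lemma prod_rpow_sum_le {ι : Type} (s : Finset ι) (w : ι → ℝ)
    (hw : ∀ y ∈ s, 0 ≤ w y) (hw1 : ∑ y ∈ s, w y = 1)
    (p : ι → Fin n → ℝ) (hp : ∀ y ∈ s, ∀ i, 0 ≤ p y i)
    (t : Fin n → ℝ) (ht : ∀ i, 0 ≤ t i) :
    ∏ i, t i ^ (∑ y ∈ s, w y * p y i) ≤ ∑ y ∈ s, w y * ∏ i, t i ^ (p y i) := by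
  have h1 : ∏ i, t i ^ (∑ y ∈ s, w y * p y i)
      = ∏ y ∈ s, (∏ i, t i ^ (p y i)) ^ (w y) := by
    calc ∏ i, t i ^ (∑ y ∈ s, w y * p y i)
        = ∏ i, ∏ y ∈ s, t i ^ (w y * p y i) := by
          refine Finset.prod_congr rfl fun i _ => ?_
          exact Real.rpow_sum_of_nonneg (ht i)
            (fun y hy => mul_nonneg (hw y hy) (hp y hy i))
      _ = ∏ y ∈ s, ∏ i, t i ^ (w y * p y i) := Finset.prod_comm
      _ = ∏ y ∈ s, (∏ i, t i ^ (p y i)) ^ (w y) := by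
          refine Finset.prod_congr rfl fun y hy => ?_
          rw [← Real.finset_prod_rpow _ _ (fun i _ => Real.rpow_nonneg (ht i) _)]
          refine Finset.prod_congr rfl fun i _ => ?_
          rw [← Real.rpow_mul (ht i), mul_comm]
  rw [h1]
  exact Real.geom_mean_le_arith_mean_weighted s w _ hw hw1
    (fun y _ => Finset.prod_nonneg fun i _ => Real.rpow_nonneg (ht i) _)

theorem rho_ge_monomial_of_mem_newton_polyhedron (n : ℕ) (hn : 1 ≤ n)
    (A : Finset (Fin n → ℕ)) (hA : A.Nonempty)
    (u : Fin n → ℝ) (hu : ∀ i, 0 ≤ u i)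
    (huA : ∃ a ∈ convexHull ℝ ((fun α : Fin n → ℕ => fun i => (α i : ℝ)) '' ↑A),
      ∃ r : Fin n → ℝ, (∀ i, 0 ≤ r i) ∧ u = a + r) :
    ∃ C > (0 : ℝ), ∃ U ∈ nhds (0 : Fin n → ℂ), ∀ x ∈ U,
      C * ∏ i, ‖x i‖ ^ (u i) ≤ ∑ α ∈ A, ∏ i, ‖x i‖ ^ (α i) := by
  obtain ⟨a, ha, r, hr, hur⟩ := huA
  -- extract a convex combination
  rw [convexHull_eq] at ha
  obtain ⟨ι, s, w, z, hw0, hw1, hzs, hz⟩ := ha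
  rw [Finset.centerMass_eq_of_sum_1 _ _ hw1] at hz
  -- preimages in A
  choose α hαA hαz using fun y (hy : y ∈ s) => hzs y hy
  have ha_coord : ∀ i, a i = ∑ y ∈ s, w y * z y i := by
    intro i
    rw [← hz]
    simp [Finset.sum_apply]
  have hz_nonneg : ∀ y ∈ s, ∀ i, 0 ≤ z y i := by
    intro y hy i
    rw [← hαz y hy]
    exact Nat.cast_nonneg _
  have ha_nonneg : ∀ i, 0 ≤ a i := by
    intro i
    rw [ha_coord i]
    exact Finset.sum_nonneg fun y hy => mul_nonneg (hw0 y hy) (hz_nonneg y hy i)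
  have hau : ∀ i, a i ≤ u i := by
    intro i; rw [hur]; simpa using hr i
  refine ⟨1, one_pos, Metric.ball 0 1, Metric.ball_mem_nhds _ one_pos, fun x hx => ?_⟩
  set t : Fin n → ℝ := fun i => ‖x i‖ with ht_def
  have ht0 : ∀ i, 0 ≤ t i := fun i => norm_nonneg _
  have ht1 : ∀ i, t i ≤ 1 := by
    intro i
    have := norm_le_pi_norm x i
    have hx' : ‖x‖ < 1 := by simpa [dist_eq_norm] using hx
    linarith
  rw [one_mul]
  calc ∏ i, t i ^ (u i)
      ≤ ∏ i, t i ^ (a i) := by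
        refine Finset.prod_le_prod (fun i _ => Real.rpow_nonneg (ht0 i) _)
          (fun i _ => rpow_le_rpow_exp_ge (ht0 i) (ht1 i) (ha_nonneg i) (hau i))
    _ = ∏ i, t i ^ (∑ y ∈ s, w y * z y i) := by
        refine Finset.prod_congr rfl fun i _ => by rw [ha_coord i]
    _ ≤ ∑ y ∈ s, w y * ∏ i, t i ^ (z y i) :=
        prod_rpow_sum_le s w hw0 hw1 (fun y i => z y i) hz_nonneg t ht0
    _ ≤ ∑ y ∈ s, w y * ∑ β ∈ A, ∏ i, t i ^ (β i : ℕ) := by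
        refine Finset.sum_le_sum fun y hy => ?_
        refine mul_le_mul_of_nonneg_left ?_ (hw0 y hy)
        have : ∏ i, t i ^ (z y i) = ∏ i, t i ^ (α y hy i : ℕ) := by
          refine Finset.prod_congr rfl fun i _ => ?_
          rw [← hαz y hy]
          simp [Real.rpow_natCast]
        rw [this]
        exact Finset.single_le_sum (f := fun β => ∏ i, t i ^ (β i : ℕ))
          (fun β _ => Finset.prod_nonneg fun i _ => pow_nonneg (ht0 i) _) (hαA y hy)
    _ = ∑ β ∈ A, ∏ i, t i ^ (β i : ℕ) := by
        rw [← Finset.sum_mul, hw1, one_mul]
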